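/- Let a ≥ 1, n = 2^a, and K = 2a+1. Suppose (A_{iI}, A_{iQ})_{i=1}^{2a+1} are n×n complex matrices, all unitary, with A_{1I} = I_n, satisfying the SSD conditions. Then there exist an index i ∈ {2,…,2a+1} and a real number c ∈ {+1, −1} with A_{iI} = c·A_{iQ}. (Hence a 2^a × 2^a unitary-weight SSD code satisfying the non-pathology requirement cannot have K = 2a+1 complex variables.) -/

import Mathlib

open Module

section RingHelpers
variable {R : Type*} [Ring R]

lemma prod_w {x y w : R} (hww : w * w = -1) (hwy : w * y = -(y * w)) :
    (x * w) * (y * w) = x * y := by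
  have h1 : (x * w) * (y * w) = x * ((w * y) * w) := by noncomm_ring
  rw [h1, hwy]
  have h2 : x * (-(y * w) * w) = -((x * y) * (w * w)) := by noncomm_ring
  rw [h2, hww]
  noncomm_ring

end RingHelpers

section RestrictHelpers
variable {V : Type} [AddCommGroup V] [Module ℂ V] {W : Submodule ℂ V}

lemma restrict_mul_eq {f g e : Module.End ℂ V}
    (hf : ∀ x ∈ W, f x ∈ W) (hg : ∀ x ∈ W, g x ∈ W) (he : ∀ x ∈ W, e x ∈ W)
    (h : f * g = e) :
    (f.restrict hf) * (g.restrict hg) = e.restrict he := by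
  apply LinearMap.ext; intro x; apply Subtype.ext
  show f (g (x : V)) = e (x : V)
  rw [← h]; rfl

lemma restrict_neg_eq {e : Module.End ℂ V} (he : ∀ x ∈ W, e x ∈ W)
    (he' : ∀ x ∈ W, (-e) x ∈ W) : (-e).restrict he' = -(e.restrict he) := by
  apply LinearMap.ext; intro x; apply Subtype.ext; rfl

lemma restrict_neg_one (he : ∀ x ∈ W, (-1 : Module.End ℂ V) x ∈ W) :
    (-1 : Module.End ℂ V).restrict he = (-1 : Module.End ℂ W) := by
  apply LinearMap.ext; intro x; apply Subtype.ext; rfl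

end RestrictHelpers

set_option maxHeartbeats 1000000 in
theorem end_commutant : ∀ (a : ℕ) (V : Type) [AddCommGroup V] [Module ℂ V]
    [FiniteDimensional ℂ V], Module.finrank ℂ V ≤ 2 ^ a →
    ∀ (B : Fin (2 * a) → Module.End ℂ V), (∀ i, B i * B i = -1) →
    (∀ i j : Fin (2 * a), i ≠ j → B i * B j = -(B j * B i)) →
    ∀ Z : Module.End ℂ V, (∀ i, Z * B i = B i * Z) →
    ∃ c : ℂ, Z = c • 1 := by
  intro a
  induction a with
  | zero =>
    intro V _ _ _ hdim B _ _ Z _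
    interval_cases h : Module.finrank ℂ V
    · have : Subsingleton V := Module.finrank_zero_iff.mp h
      exact ⟨0, LinearMap.ext fun v => Subsingleton.elim _ _⟩
    · obtain ⟨v, hv, hspan⟩ := finrank_eq_one_iff'.mp h
      obtain ⟨c, hc⟩ := hspan (Z v)
      refine ⟨c, LinearMap.ext fun w => ?_⟩
      obtain ⟨t, ht⟩ := hspan w
      simp only [← ht, map_smul, LinearMap.smul_apply, Module.End.one_apply, ← hc]
  | succ a ih =>
    intro V _ _ _ hdim B hsq hac Z hZ
    have hsqp : ∀ i x, B i (B i x) = -x := by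
      intro i x
      simpa [Module.End.mul_apply] using LinearMap.ext_iff.mp (hsq i) x
    have hacp : ∀ i j, i ≠ j → ∀ x, B i (B j x) = -(B j (B i x)) := by
      intro i j h x
      simpa [Module.End.mul_apply] using LinearMap.ext_iff.mp (hac i j h) x
    have hZp : ∀ i x, Z (B i x) = B i (Z x) := by
      intro i x
      simpa [Module.End.mul_apply] using LinearMap.ext_iff.mp (hZ i) x
    have hi0 : (0 : ℕ) < 2 * (a + 1) := by omega
    have hi1 : (1 : ℕ) < 2 * (a + 1) := by omega
    set i0 : Fin (2 * (a + 1)) := ⟨0, hi0⟩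
    set i1 : Fin (2 * (a + 1)) := ⟨1, hi1⟩
    have h01 : i0 ≠ i1 := by simp [i0, i1, Fin.ext_iff]
    set B0 := B i0 with hB0
    set B1 := B i1 with hB1
    set W : Submodule ℂ V := LinearMap.ker (B0 - Complex.I • 1) with hWdef
    set W' : Submodule ℂ V := LinearMap.ker (B0 + Complex.I • 1) with hW'def
    have hW : ∀ x, x ∈ W ↔ B0 x = Complex.I • x := by
      intro x
      simp [hWdef, LinearMap.mem_ker, sub_eq_zero, LinearMap.sub_apply,
        LinearMap.smul_apply, Module.End.one_apply]
    have hW' : ∀ x, x ∈ W' ↔ B0 x = -(Complex.I • x) := by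
      intro x
      simp [hW'def, LinearMap.mem_ker, add_eq_zero_iff_eq_neg, LinearMap.add_apply,
        LinearMap.smul_apply, Module.End.one_apply]
    -- B1 swaps W and W'
    have hB1W : ∀ x ∈ W, B1 x ∈ W' := by
      intro x hx
      rw [hW'] ; rw [hW] at hx
      rw [hacp i0 i1 h01, hx, map_smul]
    have hB1W' : ∀ x ∈ W', B1 x ∈ W := by
      intro x hx
      rw [hW] ; rw [hW'] at hx
      rw [hacp i0 i1 h01, hx, map_neg, map_smul, neg_neg]
    have hB1inj : Function.Injective B1 := by
      intro x y hxy
      have hx := hsqp i1 x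
      have hy := hsqp i1 y
      rw [hxy, hy] at hx
      exact (neg_injective hx).symm
    -- equal dimensions
    have hr1 : finrank ℂ W ≤ finrank ℂ W' :=
      LinearMap.finrank_le_finrank_of_injective
        (f := B1.restrict hB1W) (fun x y h => Subtype.ext (hB1inj (congrArg Subtype.val h)))
    have hr2 : finrank ℂ W' ≤ finrank ℂ W :=
      LinearMap.finrank_le_finrank_of_injective
        (f := B1.restrict hB1W') (fun x y h => Subtype.ext (hB1inj (congrArg Subtype.val h)))
    have hdisj : W ⊓ W' = ⊥ := by
      rw [Submodule.eq_bot_iff]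
      rintro x ⟨hx1, hx2⟩
      rw [SetLike.mem_coe, hW x] at hx1
      rw [SetLike.mem_coe, hW' x] at hx2
      have h4 : Complex.I • x = -(Complex.I • x) := hx1.symm.trans hx2
      have h5 : (Complex.I + Complex.I) • x = 0 := by
        rw [add_smul]; exact add_eq_zero_iff_eq_neg.mpr h4
      rcases smul_eq_zero.mp h5 with h | h
      · exact absurd h (by simp [Complex.ext_iff])
      · exact h
    have hsum : finrank ℂ W + finrank ℂ W' ≤ finrank ℂ V := by
      have := Submodule.finrank_sup_add_finrank_inf_eq W W'
      rw [hdisj] at this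
      simp only [finrank_bot, add_zero] at this
      rw [← this]
      exact Submodule.finrank_le _
    have hWdim : finrank ℂ W ≤ 2 ^ a := by
      have : 2 ^ (a + 1) = 2 ^ a + 2 ^ a := by ring
      omega
    -- the reduced family on W
    have hemp : ∀ k : Fin (2 * a), k.val + 2 < 2 * (a + 1) := fun k => by omega
    set em : Fin (2 * a) → Fin (2 * (a + 1)) := fun k => ⟨k.val + 2, hemp k⟩ with hem
    have hem0 : ∀ k, i0 ≠ em k := fun k => by simp [i0, hem, Fin.ext_iff]
    have hem1 : ∀ k, i1 ≠ em k := fun k => by simp [i1, hem, Fin.ext_iff]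
    have hemne : ∀ k l : Fin (2 * a), k ≠ l → em k ≠ em l := by
      intro k l h hh
      exact h (Fin.ext (by simpa [hem, Fin.ext_iff] using hh))
    set G : Fin (2 * a) → Module.End ℂ V := fun k => B (em k) * B1 with hG
    have hGsq : ∀ k, G k * G k = -1 := by
      intro k
      rw [hG]
      rw [prod_w (hsq i1) (hac i1 (em k) (hem1 k)), hsq (em k)]
    have hGac : ∀ k l, k ≠ l → G k * G l = -(G l * G k) := by
      intro k l h
      rw [hG]
      rw [prod_w (hsq i1) (hac i1 (em l) (hem1 l)),
        prod_w (hsq i1) (hac i1 (em k) (hem1 k))]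
      exact hac (em k) (em l) (hemne k l h)
    have hZG : ∀ k, Z * G k = G k * Z := by
      intro k
      rw [hG]
      calc Z * (B (em k) * B1) = (Z * B (em k)) * B1 := by noncomm_ring
        _ = (B (em k) * Z) * B1 := by rw [hZ (em k)]
        _ = B (em k) * (Z * B1) := by noncomm_ring
        _ = B (em k) * (B1 * Z) := by rw [hZ i1]
        _ = (B (em k) * B1) * Z := by noncomm_ring
    have hGW : ∀ k, ∀ x ∈ W, G k x ∈ W := by
      intro k x hx
      rw [hW] at hx ⊢
      have happ : G k x = B (em k) (B1 x) := rfl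
      rw [happ, hacp i0 (em k) (hem0 k), hacp i0 i1 h01, hx, map_smul, map_neg,
        map_smul, neg_neg]
    have hZW : ∀ x ∈ W, Z x ∈ W := by
      intro x hx
      rw [hW] at hx ⊢
      rw [← hZp i0, hx, map_smul]
    set B' : Fin (2 * a) → Module.End ℂ W := fun k => (G k).restrict (hGW k) with hB'
    set Z' : Module.End ℂ W := Z.restrict hZW with hZ'def
    have hnegW : ∀ x ∈ W, (-1 : Module.End ℂ V) x ∈ W := fun x hx => by
      simpa using W.neg_mem hx
    have hsq' : ∀ k, B' k * B' k = -1 := by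
      intro k
      rw [hB']
      rw [restrict_mul_eq (hGW k) (hGW k) hnegW (hGsq k), restrict_neg_one]
    have hac' : ∀ k l, k ≠ l → B' k * B' l = -(B' l * B' k) := by
      intro k l h
      have hlk : ∀ x ∈ W, (G l * G k) x ∈ W := fun x hx => hGW l _ (hGW k x hx)
      have hnlk : ∀ x ∈ W, (-(G l * G k)) x ∈ W := fun x hx => by
        simpa using W.neg_mem (hlk x hx)
      rw [hB']
      rw [restrict_mul_eq (hGW k) (hGW l) hnlk (hGac k l h),
        restrict_neg_eq hlk hnlk,
        restrict_mul_eq (hGW l) (hGW k) hlk rfl]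
    have hZc' : ∀ k, Z' * B' k = B' k * Z' := by
      intro k
      have h1 : ∀ x ∈ W, (Z * G k) x ∈ W := fun x hx => hZW _ (hGW k x hx)
      rw [hB', hZ'def]
      rw [restrict_mul_eq hZW (hGW k) h1 rfl,
        restrict_mul_eq (hGW k) hZW h1 (hZG k).symm]
    obtain ⟨c, hc⟩ := ih W hWdim B' hsq' hac' Z' hZc'
    have hcW : ∀ x ∈ W, Z x = c • x := by
      intro x hx
      have h2 := congrArg Subtype.val (LinearMap.ext_iff.mp hc ⟨x, hx⟩)
      exact h2
    refine ⟨c, LinearMap.ext fun v => ?_⟩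
    set p : V := (2⁻¹ : ℂ) • (v - Complex.I • B0 v) with hp
    set q : V := (2⁻¹ : ℂ) • (v + Complex.I • B0 v) with hq
    have hpq : p + q = v := by
      rw [hp, hq]; module
    have hpW : p ∈ W := by
      rw [hW, hp]
      rw [map_smul, map_sub, map_smul, hsqp i0, smul_neg, sub_neg_eq_add]
      match_scalars <;> ring_nf <;> simp [Complex.I_sq] <;> ring_nf
    have hqW' : q ∈ W' := by
      rw [hW', hq]
      rw [map_smul, map_add, map_smul, hsqp i0, smul_neg]
      match_scalars <;> ring_nf <;> simp [Complex.I_sq] <;> ring_nf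
    have hwW : -(B1 q) ∈ W := W.neg_mem (hB1W' q hqW')
    have hZq : Z q = c • q := by
      have h6 : B1 (-(B1 q)) = q := by rw [map_neg, hsqp i1, neg_neg]
      calc Z q = Z (B1 (-(B1 q))) := by rw [h6]
        _ = B1 (Z (-(B1 q))) := hZp i1 _
        _ = B1 (c • -(B1 q)) := by rw [hcW _ hwW]
        _ = c • q := by rw [map_smul, h6]
    have hZv : Z v = c • v := by
      rw [← hpq, map_add, hcW p hpW, hZq, ← smul_add]
    simpa using hZv


section RingHelpers2
variable {R : Type*} [Ring R]

lemma anti_sandwich {b x y : R} (hbx : b * x = -(x * b)) (hby : b * y = -(y * b)) :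
    b * (x * y * x) = -((x * y * x) * b) := by
  calc b * (x*y*x) = (b*x)*y*x := by noncomm_ring
  _ = (-(x*b))*y*x := by rw [hbx]
  _ = -(x*(b*y)*x) := by noncomm_ring
  _ = -(x*(-(y*b))*x) := by rw [hby]
  _ = x*y*(b*x) := by noncomm_ring
  _ = x*y*(-(x*b)) := by rw [hbx]
  _ = -((x*y*x)*b) := by noncomm_ring

lemma case_eq {x y : R} (hxx : x * x = -1) : x*(y + x*y*x) = -((y + x*y*x)*x) := by
  have h1 : x*(y + x*y*x) = x*y + (x*x)*(y*x) := by noncomm_ring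
  have h2 : (y + x*y*x)*x = y*x + (x*y)*(x*x) := by noncomm_ring
  rw [h1, h2, hxx]
  noncomm_ring

lemma case_eq2 {x y : R} (hxx : x * x = -1) : x*(y - x*y*x) = (y - x*y*x)*x := by
  have h1 : x*(y - x*y*x) = x*y - (x*x)*(y*x) := by noncomm_ring
  have h2 : (y - x*y*x)*x = y*x - (x*y)*(x*x) := by noncomm_ring
  rw [h1, h2, hxx]
  noncomm_ring

lemma Zcomm_self {x p : R} (hcomm : x*p = p*x) : (-(p*x))*x = x*(-(p*x)) := by
  have h1 : (-(p*x))*x = -(p*(x*x)) := by noncomm_ring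
  have h2 : x*(-(p*x)) = -((x*p)*x) := by noncomm_ring
  rw [h1, h2, hcomm]
  noncomm_ring

lemma Zcomm_other {x b p : R} (hbx : b*x = -(x*b)) (hbp : b*p = -(p*b)) :
    (-(p*x))*b = b*(-(p*x)) := by
  have h1 : b*(-(p*x)) = -((b*p)*x) := by noncomm_ring
  rw [h1, hbp]
  have h2 : -(-(p*b)*x) = p*(b*x) := by noncomm_ring
  rw [h2, hbx]
  noncomm_ring

lemma ZB_eq {x p : R} (hxx : x*x = -1) : (-(p*x))*x = p := by
  have h1 : (-(p*x))*x = -(p*(x*x)) := by noncomm_ring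
  rw [h1, hxx]
  noncomm_ring

lemma sub_anti {u0 u1 e0 e1 : R} (h1 : u0*u1 = -(u1*u0)) (h2 : e1*u0 = -(u0*e1))
    (h3 : e0*u1 = -(u1*e0)) (h4 : e0*e1 = -(e1*e0)) :
    (u0-e0)*(u1-e1) = -((u1-e1)*(u0-e0)) := by
  have exp1 : (u0-e0)*(u1-e1) = u0*u1 - u0*e1 - e0*u1 + e0*e1 := by noncomm_ring
  have exp2 : (u1-e1)*(u0-e0) = u1*u0 - u1*e0 - e1*u0 + e1*e0 := by noncomm_ring
  rw [exp1, exp2, h1, h2, h3, h4]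
  noncomm_ring

lemma anti_anti_comm {x y b : R} (hx : b*x = -(x*b)) (hy : b*y = -(y*b)) :
    (x*y)*b = b*(x*y) := by
  have h1 : b*(x*y) = (b*x)*y := by noncomm_ring
  rw [h1, hx]
  have h2 : -(x*b)*y = -(x*(b*y)) := by noncomm_ring
  rw [h2, hy]
  noncomm_ring

end RingHelpers2


theorem mat_commutant (a : ℕ) (B : Fin (2 * a) → Matrix (Fin (2 ^ a)) (Fin (2 ^ a)) ℂ)
    (hsq : ∀ i, B i * B i = -1)
    (hac : ∀ i j : Fin (2 * a), i ≠ j → B i * B j = -(B j * B i))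
    (Z : Matrix (Fin (2 ^ a)) (Fin (2 ^ a)) ℂ) (hZ : ∀ i, Z * B i = B i * Z) :
    ∃ c : ℂ, Z = c • 1 := by
  let e := Matrix.toLinAlgEquiv' (n := Fin (2 ^ a)) (R := ℂ)
  have hdim : Module.finrank ℂ (Fin (2 ^ a) → ℂ) ≤ 2 ^ a :=
    le_of_eq (Module.finrank_fin_fun ℂ)
  obtain ⟨c, hc⟩ := end_commutant a (Fin (2 ^ a) → ℂ) hdim (fun i => e (B i))
    (fun i => by rw [← map_mul, hsq i, map_neg, map_one])
    (fun i j h => by rw [← map_mul, ← map_mul, hac i j h, map_neg])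
    (e Z) (fun i => by rw [← map_mul, ← map_mul, hZ i])
  refine ⟨c, e.injective ?_⟩
  rw [hc, map_smul, map_one]

open Matrix

open scoped ComplexOrder in
lemma mat_zero_of_conjT_mul_self {n : ℕ} {D : Matrix (Fin n) (Fin n) ℂ} (h : Dᴴ * D = 0) :
    D = 0 :=
  Matrix.conjTranspose_mul_self_eq_zero.mp h

/-- The SSD conditions on a family of weight-matrix pairs. -/
def SSDConds {n K : ℕ} (AI AQ : Fin K → Matrix (Fin n) (Fin n) ℂ) : Prop :=
  ∀ i j : Fin K, i ≠ j →
    (AI i)ᴴ * AQ j + (AQ j)ᴴ * AI i = 0 ∧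
    (AI i)ᴴ * AI j + (AI j)ᴴ * AI i = 0 ∧
    (AQ i)ᴴ * AQ j + (AQ j)ᴴ * AQ i = 0

set_option maxHeartbeats 1000000 in
/-- A `2^a × 2^a` unitary-weight SSD family with `K = 2a + 1` complex
variables necessarily violates the non-pathology requirement: some `A_{iI}`
with `i ≥ 2` equals `± A_{iQ}`. -/
theorem no_uw_ssd_with_2a_plus_1_symbols (a : ℕ) (ha : 1 ≤ a)
    (AI AQ : Fin (2 * a + 1) → Matrix (Fin (2 ^ a)) (Fin (2 ^ a)) ℂ)
    (hUI : ∀ i, (AI i)ᴴ * AI i = 1) (hUQ : ∀ i, (AQ i)ᴴ * AQ i = 1)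
    (h1 : AI 0 = 1)
    (hSSD : SSDConds AI AQ) :
    ∃ i : Fin (2 * a + 1), i ≠ 0 ∧ ∃ c : ℝ, (c = 1 ∨ c = -1) ∧ AI i = (c : ℂ) • AQ i := by
  unfold SSDConds at hSSD
  have hn : 0 < 2 ^ a := Nat.pow_pos (by norm_num)
  set B : Fin (2 * a) → Matrix (Fin (2 ^ a)) (Fin (2 ^ a)) ℂ := fun i => AI i.succ with hBdef
  set C : Fin (2 * a) → Matrix (Fin (2 ^ a)) (Fin (2 ^ a)) ℂ := fun i => AQ i.succ with hCdef
  -- skewness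
  have hskewB : ∀ i : Fin (2 * a), (B i)ᴴ = -(B i) := by
    intro i
    have h := (hSSD 0 i.succ (Fin.succ_ne_zero i).symm).2.1
    rw [h1, Matrix.conjTranspose_one, Matrix.one_mul, Matrix.mul_one] at h
    exact eq_neg_of_add_eq_zero_right h
  have hskewC : ∀ i : Fin (2 * a), (C i)ᴴ = -(C i) := by
    intro i
    have h := (hSSD 0 i.succ (Fin.succ_ne_zero i).symm).1
    rw [h1, Matrix.conjTranspose_one, Matrix.one_mul, Matrix.mul_one] at h
    exact eq_neg_of_add_eq_zero_right h
  -- squares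
  have hB2 : ∀ i, B i * B i = -1 := by
    intro i
    have h := hUI i.succ
    rw [show (AI i.succ)ᴴ = (B i)ᴴ from rfl, hskewB i, neg_mul] at h
    exact neg_eq_iff_eq_neg.mp h
  have hC2 : ∀ i, C i * C i = -1 := by
    intro i
    have h := hUQ i.succ
    rw [show (AQ i.succ)ᴴ = (C i)ᴴ from rfl, hskewC i, neg_mul] at h
    exact neg_eq_iff_eq_neg.mp h
  -- anticommutation
  have hsne : ∀ i j : Fin (2 * a), i ≠ j → i.succ ≠ j.succ := by
    intro i j h hh
    exact h (Fin.succ_inj.mp hh)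
  have hBB : ∀ i j : Fin (2 * a), i ≠ j → B i * B j = -(B j * B i) := by
    intro i j hne
    have h := (hSSD i.succ j.succ (hsne i j hne)).2.1
    rw [show (AI i.succ)ᴴ = (B i)ᴴ from rfl, show (AI j.succ)ᴴ = (B j)ᴴ from rfl,
      hskewB i, hskewB j, neg_mul, neg_mul, ← neg_add, neg_eq_zero] at h
    exact eq_neg_of_add_eq_zero_left h
  have hCC : ∀ i j : Fin (2 * a), i ≠ j → C i * C j = -(C j * C i) := by
    intro i j hne
    have h := (hSSD i.succ j.succ (hsne i j hne)).2.2
    rw [show (AQ i.succ)ᴴ = (C i)ᴴ from rfl, show (AQ j.succ)ᴴ = (C j)ᴴ from rfl,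
      hskewC i, hskewC j, neg_mul, neg_mul, ← neg_add, neg_eq_zero] at h
    exact eq_neg_of_add_eq_zero_left h
  have hBC : ∀ i j : Fin (2 * a), i ≠ j → B i * C j = -(C j * B i) := by
    intro i j hne
    have h := (hSSD i.succ j.succ (hsne i j hne)).1
    rw [show (AI i.succ)ᴴ = (B i)ᴴ from rfl, show (AQ j.succ)ᴴ = (C j)ᴴ from rfl,
      hskewB i, hskewC j, neg_mul, neg_mul, ← neg_add, neg_eq_zero] at h
    exact eq_neg_of_add_eq_zero_left h
  -- the decomposition C j = c j • B j + Dm j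
  set Dm : Fin (2 * a) → Matrix (Fin (2 ^ a)) (Fin (2 ^ a)) ℂ :=
    fun j => (2⁻¹ : ℂ) • (C j + B j * C j * B j) with hDmdef
  set Cp : Fin (2 * a) → Matrix (Fin (2 ^ a)) (Fin (2 ^ a)) ℂ :=
    fun j => (2⁻¹ : ℂ) • (C j - B j * C j * B j) with hCpdef
  have hsplit : ∀ j, C j = Cp j + Dm j := by
    intro j
    rw [hCpdef, hDmdef]
    module
  have hDanti : ∀ j i, B i * Dm j = -(Dm j * B i) := by
    intro j i
    rw [hDmdef]
    simp only [mul_smul_comm, smul_mul_assoc, ← smul_neg]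
    congr 1
    by_cases h : i = j
    · subst h
      exact case_eq (hB2 i)
    · have e1 := hBC i j h
      have e2 := anti_sandwich (hBB i j h) e1
      calc B i * (C j + B j * C j * B j)
          = B i * C j + B i * (B j * C j * B j) := by noncomm_ring
        _ = -(C j * B i) + -((B j * C j * B j) * B i) := by rw [e1, e2]
        _ = -((C j + B j * C j * B j) * B i) := by noncomm_ring
  have hCpcomm : ∀ j, B j * Cp j = Cp j * B j := by
    intro j
    rw [hCpdef]
    simp only [mul_smul_comm, smul_mul_assoc]
    congr 1
    exact case_eq2 (hB2 j)
  have hCpanti : ∀ j i, i ≠ j → B i * Cp j = -(Cp j * B i) := by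
    intro j i h
    rw [hCpdef]
    simp only [mul_smul_comm, smul_mul_assoc, ← smul_neg]
    congr 1
    have e1 := hBC i j h
    have e2 := anti_sandwich (hBB i j h) e1
    calc B i * (C j - B j * C j * B j)
        = B i * C j - B i * (B j * C j * B j) := by noncomm_ring
      _ = -(C j * B i) - -((B j * C j * B j) * B i) := by rw [e1, e2]
      _ = -((C j - B j * C j * B j) * B i) := by noncomm_ring
  -- Cp j is a multiple of B j
  have hCp : ∀ j, ∃ c : ℂ, Cp j = c • B j := by
    intro j
    have hZcomm : ∀ i, (-(Cp j * B j)) * B i = B i * (-(Cp j * B j)) := by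
      intro i
      by_cases h : i = j
      · subst h
        exact Zcomm_self (hCpcomm i)
      · exact Zcomm_other (hBB i j (by exact h)) (hCpanti j i h)
    obtain ⟨c, hc⟩ := mat_commutant a B hB2 hBB (-(Cp j * B j)) hZcomm
    refine ⟨c, ?_⟩
    have h2 : (-(Cp j * B j)) * B j = Cp j := ZB_eq (hB2 j)
    rw [hc] at h2
    rw [← h2, smul_mul_assoc, one_mul]
  obtain ⟨c0, hc0⟩ := hCp ⟨0, by omega⟩
  obtain ⟨c1, hc1⟩ := hCp ⟨1, by omega⟩
  set ia : Fin (2 * a) := ⟨0, by omega⟩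
  set ib : Fin (2 * a) := ⟨1, by omega⟩
  have hab : ia ≠ ib := by simp [ia, ib, Fin.ext_iff]
  have hDm0 : Dm ia = C ia - c0 • B ia := by
    rw [hsplit ia, hc0]; abel
  have hDm1 : Dm ib = C ib - c1 • B ib := by
    rw [hsplit ib, hc1]; abel
  -- skewness of Dm
  have hDskew : ∀ j, (Dm j)ᴴ = -(Dm j) := by
    intro j
    have hX : (B j * C j * B j)ᴴ = -(B j * C j * B j) := by
      rw [Matrix.conjTranspose_mul, Matrix.conjTranspose_mul, hskewB j, hskewC j]
      simp only [Matrix.neg_mul, Matrix.mul_neg, neg_neg]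
      rw [Matrix.mul_assoc]
    rw [hDmdef]
    rw [Matrix.conjTranspose_smul, Matrix.conjTranspose_add, hX, hskewC j]
    rw [show (star (2⁻¹ : ℂ)) = (2⁻¹ : ℂ) by simp]
    rw [← smul_neg]
    congr 1
    abel
  -- Dm ia and Dm ib anticommute
  have hDD : Dm ia * Dm ib = -(Dm ib * Dm ia) := by
    rw [hDm0, hDm1]
    refine sub_anti (hCC ia ib hab) ?_ ?_ ?_
    · rw [smul_mul_assoc, mul_smul_comm, hBC ib ia (Ne.symm hab), smul_neg]
    · rw [smul_mul_assoc, mul_smul_comm, hBC ia ib hab, smul_neg]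
    · rw [smul_mul_assoc, mul_smul_comm, smul_mul_assoc, mul_smul_comm,
        hBB ia ib hab, smul_neg, smul_neg, smul_comm c0 c1]
  -- scalars
  obtain ⟨ρ, hρ⟩ := mat_commutant a B hB2 hBB (Dm ia * Dm ib)
    (fun i => anti_anti_comm (hDanti ia i) (hDanti ib i))
  obtain ⟨μ, hμ⟩ := mat_commutant a B hB2 hBB (Dm ia * Dm ia)
    (fun i => anti_anti_comm (hDanti ia i) (hDanti ia i))
  have h10 : Dm ib * Dm ia = (-ρ) • (1 : Matrix (Fin (2 ^ a)) (Fin (2 ^ a)) ℂ) := by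
    have h2 : -(Dm ib * Dm ia) = ρ • (1 : Matrix (Fin (2 ^ a)) (Fin (2 ^ a)) ℂ) := by
      rw [← hDD, hρ]
    rw [neg_smul]
    exact neg_eq_iff_eq_neg.mp h2
  -- conclusion: one of Dm ia, Dm ib vanishes
  have hconc : Dm ia = 0 ∨ Dm ib = 0 := by
    have e1 : Dm ib * (Dm ia * Dm ib) = ρ • Dm ib := by
      rw [hρ, mul_smul_comm, mul_one]
    have e2 : Dm ib * (Dm ia * Dm ib) = (-ρ) • Dm ib := by
      rw [← Matrix.mul_assoc, h10, smul_mul_assoc, Matrix.one_mul]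
    have e3 : (ρ - -ρ) • Dm ib = 0 := by
      rw [sub_smul, ← e1, ← e2, sub_self]
    rcases smul_eq_zero.mp e3 with h | h
    · have hρ0 : ρ = 0 := by linear_combination h / 2
      rw [hρ0, zero_smul] at hρ
      have f1 : (Dm ia * Dm ia) * Dm ib = μ • Dm ib := by
        rw [hμ, smul_mul_assoc, Matrix.one_mul]
      rw [Matrix.mul_assoc, hρ, Matrix.mul_zero] at f1
      rcases smul_eq_zero.mp f1.symm with hμ0 | h
      · rw [hμ0, zero_smul] at hμ
        left
        have h5 : (Dm ia)ᴴ * Dm ia = 0 := by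
          rw [hDskew ia, Matrix.neg_mul, hμ, neg_zero]
        exact mat_zero_of_conjT_mul_self h5
      · exact Or.inr h
    · exact Or.inr h
  -- endgame
  have main : ∀ j : Fin (2 * a), ∀ c : ℂ, Cp j = c • B j → Dm j = 0 →
      ∃ i : Fin (2 * a + 1), i ≠ 0 ∧ ∃ cr : ℝ, (cr = 1 ∨ cr = -1) ∧ AI i = (cr : ℂ) • AQ i := by
    intro j c hcB hD0
    have hCj : C j = c • B j := by rw [hsplit j, hcB, hD0, add_zero]
    have hcsq : c * c = 1 := by
      have h := hC2 j
      rw [hCj, smul_mul_assoc, mul_smul_comm, smul_smul, hB2 j] at h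
      rw [smul_neg] at h
      have h2 : (c * c) • (1 : Matrix (Fin (2 ^ a)) (Fin (2 ^ a)) ℂ) = 1 := neg_injective h
      have h4 := congrFun (congrFun h2 ⟨0, hn⟩) ⟨0, hn⟩
      simpa [Matrix.one_apply] using h4
    have hBj : B j = c • C j := by
      rw [hCj, smul_smul, hcsq, one_smul]
    rcases mul_self_eq_one_iff.mp hcsq with hc1 | hcm1
    · refine ⟨j.succ, Fin.succ_ne_zero j, 1, Or.inl rfl, ?_⟩
      show B j = ((1 : ℝ) : ℂ) • C j
      rw [hBj, hc1]
      norm_num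
    · refine ⟨j.succ, Fin.succ_ne_zero j, -1, Or.inr rfl, ?_⟩
      show B j = ((-1 : ℝ) : ℂ) • C j
      rw [hBj, hcm1]
      norm_num
  rcases hconc with h | h
  · exact main ia c0 hc0 h
  · exact main ib c1 hc1 h
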